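/- Let n ≥ 2 and let a, b : Fin n → ℝ. For every ε > 0 there exists b' : Fin n → ℝ with |b_i − b'_i| < ε for all i, such that the characteristic polynomial of the n-node ring Jacobian J(a,b'), regarded as a polynomial over ℂ, has n distinct roots (equivalently, is squarefree); that is, all eigenvalues of J(a,b') are simple. In particular, simplicity of all eigenvalues can be achieved by arbitrarily small perturbations of the coupling entries b alone, keeping the diagonal entries a fixed. -/

import Mathlib

open Polynomial

/-- The n-node ring Jacobian: diagonal entries `a i`, entries `b i` in position
`(i, i+1 mod n)`, all other entries zero. -/
def ringJacobianN (n : ℕ) (a b : Fin n → ℝ) : Matrix (Fin n) (Fin n) ℝ :=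
  Matrix.of fun i j =>
    if (j : ℕ) = (i : ℕ) then a i
    else if (j : ℕ) = ((i : ℕ) + 1) % n then b i else 0

open Fin.NatCast Fin.CommRing in
lemma ring_perm_classify {m : ℕ} (σ : Equiv.Perm (Fin (m + 2)))
    (h : ∀ i, σ i = i ∨ σ i = i - 1) :
    σ = 1 ∨ ∀ i, σ i = i - 1 := by
  by_cases hall : ∀ i, σ i = i
  · left; ext i; simp [hall i]
  · right
    push_neg at hall
    obtain ⟨i0, hi0⟩ := hall
    have one_ne : (1 : Fin (m + 2)) ≠ 0 := by
      intro h1; have := congrArg Fin.val h1; simp at this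
    have hS : ∀ k : ℕ, σ (i0 - (k : Fin (m + 2))) = (i0 - (k : Fin (m + 2))) - 1 := by
      intro k
      induction k with
      | zero => simpa using (h i0).resolve_left hi0
      | succ k ih =>
        have hcast : ((k + 1 : ℕ) : Fin (m + 2)) = (k : Fin (m + 2)) + 1 := by
          push_cast; ring
        have hx : i0 - ((k + 1 : ℕ) : Fin (m + 2)) = (i0 - (k : Fin (m + 2))) - 1 := by
          rw [hcast]; ring
        rcases h (i0 - ((k + 1 : ℕ) : Fin (m + 2))) with h1 | h1
        · exfalso
          rw [hx, ← ih] at h1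
          have h3 : σ (i0 - (k : Fin (m + 2))) = i0 - (k : Fin (m + 2)) := σ.injective h1
          rw [ih] at h3
          exact one_ne (sub_eq_self.mp h3)
        · exact h1
    intro j
    have := hS ((i0 - j : Fin (m + 2)).val)
    rwa [Fin.cast_val_eq_self, sub_sub_cancel] at this

open Fin.NatCast Fin.CommRing in
lemma det_ring {R : Type*} [CommRing R] {m : ℕ} (d e : Fin (m + 2) → R) :
    Matrix.det (Matrix.of fun i j =>
        if j = i then d i else if j = i + 1 then e i else 0)
      = (∏ i, d i) + (-1) ^ (m + 1) * ∏ i, e i := by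
  classical
  have one_ne : (1 : Fin (m + 2)) ≠ 0 := by
    intro h1; have := congrArg Fin.val h1; simp at this
  set M : Matrix (Fin (m + 2)) (Fin (m + 2)) R := Matrix.of fun i j =>
    if j = i then d i else if j = i + 1 then e i else 0 with hM
  set c : Equiv.Perm (Fin (m + 2)) := (finRotate (m + 2))⁻¹ with hc
  have hcapp : ∀ i, c i = i - 1 := by
    intro i
    rw [hc, Equiv.Perm.inv_eq_iff_eq, finRotate_succ_apply]
    ring
  have h1c : (1 : Equiv.Perm (Fin (m + 2))) ≠ c := by
    intro hh
    have h0 := DFunLike.congr_fun hh (0 : Fin (m + 2))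
    rw [hcapp, Equiv.Perm.coe_one, id_eq] at h0
    exact one_ne (sub_eq_self.mp h0.symm)
  rw [Matrix.det_apply]
  rw [← Finset.sum_subset (Finset.subset_univ ({1, c} : Finset (Equiv.Perm (Fin (m + 2)))))]
  · rw [Finset.sum_pair h1c]
    have hid : (∏ i, M ((1 : Equiv.Perm (Fin (m + 2))) i) i) = ∏ i, d i := by
      apply Finset.prod_congr rfl
      intro i _
      simp [hM]
    have hcyc : (∏ i, M (c i) i) = ∏ i, e i := by
      have step : ∀ i : Fin (m + 2), M (c i) i = e (i - 1) := by
        intro i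
        have h1 : i ≠ i - 1 := fun hh => one_ne (sub_eq_self.mp hh.symm)
        have h2 : i = (i - 1) + 1 := by ring
        rw [hcapp, hM]
        simp only [Matrix.of_apply]
        rw [if_neg h1, if_pos h2]
      rw [Finset.prod_congr rfl fun i _ => step i]
      exact Equiv.prod_comp (Equiv.subRight (1 : Fin (m + 2))) e
    have hsign : Equiv.Perm.sign c = (-1 : ℤˣ) ^ (m + 1) := by
      rw [hc, Equiv.Perm.sign_inv, sign_finRotate]
      rfl
    rw [hid, hcyc, hsign]
    simp only [Equiv.Perm.sign_one, one_smul, Units.smul_def]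
    push_cast
    rw [zsmul_eq_mul]
    push_cast
    ring
  · intro σ _ hσ
    simp only [Finset.mem_insert, Finset.mem_singleton] at hσ
    push_neg at hσ
    have hcl : ¬ ∀ i, σ i = i ∨ σ i = i - 1 := by
      intro hall
      rcases ring_perm_classify σ hall with h1 | h2
      · exact hσ.1 h1
      · exact hσ.2 (Equiv.ext fun x => by rw [h2 x, hcapp])
    push_neg at hcl
    obtain ⟨i, hi1, hi2⟩ := hcl
    have hz : M (σ i) i = 0 := by
      have c1 : i ≠ σ i := fun hh => hi1 hh.symm
      have c2 : i ≠ σ i + 1 := fun hh => hi2 (eq_sub_of_add_eq hh.symm)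
      rw [hM]
      simp only [Matrix.of_apply]
      rw [if_neg c1, if_neg c2]
    have hzz : (∏ x : Fin (m + 2), M (σ x) x) = 0 :=
      Finset.prod_eq_zero (Finset.mem_univ i) hz
    rw [hzz, smul_zero]

open Fin.NatCast Fin.CommRing in
lemma charpoly_ring {m : ℕ} (a b : Fin (m + 2) → ℝ) :
    ((ringJacobianN (m + 2) a b).map Complex.ofReal).charpoly
      = (∏ i, (X - C (a i : ℂ))) - C (∏ i, (b i : ℂ)) := by
  have hval1 : ((1 : Fin (m + 2)) : ℕ) = 1 := by
    simp [Fin.val_one']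
  have key : ∀ i j : Fin (m + 2),
      ((j : ℕ) = ((i : ℕ) + 1) % (m + 2)) ↔ j = i + 1 := by
    intro i j
    rw [Fin.ext_iff, Fin.add_def, hval1]
  have hne : ∀ i : Fin (m + 2), i ≠ i + 1 := by
    intro i hh
    have : (1 : Fin (m + 2)) = 0 := by
      have : i + 1 = i + 0 := by rw [← hh]; ring
      exact add_left_cancel this
    have := congrArg Fin.val this
    simp at this
  have hcm : Matrix.charmatrix ((ringJacobianN (m + 2) a b).map Complex.ofReal)
      = Matrix.of fun i j => if j = i then (X - C (a i : ℂ))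
          else if j = i + 1 then -C (b i : ℂ) else 0 := by
    apply Matrix.ext
    intro i j
    by_cases hij : j = i
    · subst hij
      rw [Matrix.charmatrix_apply_eq]
      simp [ringJacobianN]
    · rw [Matrix.charmatrix_apply_ne _ _ _ (fun hh => hij hh.symm)]
      simp only [Matrix.map_apply, ringJacobianN, Matrix.of_apply]
      rw [if_neg (fun hh : (j : ℕ) = (i : ℕ) => hij (Fin.ext hh))]
      rw [if_neg hij]
      by_cases h2 : j = i + 1
      · rw [if_pos ((key i j).mpr h2), if_pos h2]
      · rw [if_neg (fun hh => h2 ((key i j).mp hh)), if_neg h2]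
        simp
  rw [Matrix.charpoly, hcm]
  have := det_ring (R := ℂ[X]) (fun i => X - C (a i : ℂ)) (fun i => -C (b i : ℂ))
  rw [this]
  have hprodneg : (∏ i : Fin (m + 2), -C (b i : ℂ))
      = (-1 : ℂ[X]) ^ (m + 2) * ∏ i, C (b i : ℂ) := by
    calc (∏ i : Fin (m + 2), -C (b i : ℂ))
        = ∏ i : Fin (m + 2), ((-1 : ℂ[X]) * C (b i : ℂ)) := by
          simp [neg_one_mul]
      _ = (∏ _i : Fin (m + 2), (-1 : ℂ[X])) * ∏ i, C (b i : ℂ) :=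
          Finset.prod_mul_distrib
      _ = (-1 : ℂ[X]) ^ (m + 2) * ∏ i, C (b i : ℂ) := by
          rw [Finset.prod_const, Finset.card_univ, Fintype.card_fin]
  rw [hprodneg, map_prod]
  have : ((-1 : ℂ[X]) ^ (m + 1)) * ((-1 : ℂ[X]) ^ (m + 2)) = -1 := by
    rw [← pow_add]
    exact Odd.neg_one_pow ⟨m + 1, by ring⟩
  calc (∏ i, (X - C (a i : ℂ))) + (-1) ^ (m + 1) * ((-1) ^ (m + 2) * ∏ i, C (b i : ℂ))
      = (∏ i, (X - C (a i : ℂ)))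
        + ((-1 : ℂ[X]) ^ (m + 1) * (-1 : ℂ[X]) ^ (m + 2)) * ∏ i, C (b i : ℂ) := by ring
    _ = _ := by rw [this]; ring

theorem simple_eigenvalues_generic_ringJacobianN (n : ℕ) (hn : 2 ≤ n)
    (a b : Fin n → ℝ) :
    ∀ ε > (0 : ℝ), ∃ b' : Fin n → ℝ,
      (∀ i, |b i - b' i| < ε) ∧
      Squarefree ((ringJacobianN n a b').map Complex.ofReal).charpoly := by
  obtain ⟨m, rfl⟩ : ∃ m, n = m + 2 := ⟨n - 2, by omega⟩
  intro ε hε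
  classical
  set q : ℂ[X] := ∏ i : Fin (m + 2), (X - C (a i : ℂ)) with hq
  have hqdeg : q.natDegree = m + 2 := by
    rw [hq]
    rw [natDegree_prod _ _ (fun i _ => X_sub_C_ne_zero _)]
    simp
  have hq' : derivative q ≠ 0 := by
    intro h
    have := natDegree_eq_zero_of_derivative_eq_zero h
    omega
  set B : Set ℂ := (fun z => q.eval z) '' {z | (derivative q).eval z = 0} with hB
  have hBfin : B.Finite :=
    Set.Finite.image _ (Polynomial.finite_setOf_isRoot hq')
  -- perturb entries other than 0 to be nonzero
  set b'' : Fin (m + 2) → ℝ := fun i => if b i = 0 then ε / 2 else b i with hb''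
  set P : ℝ := ∏ i : Fin (m + 1), b'' i.succ with hP
  have hPne : P ≠ 0 := by
    rw [hP]
    apply Finset.prod_ne_zero_iff.mpr
    intro i _
    rw [hb'']
    dsimp only
    split
    · positivity
    · assumption
  -- bad real parameters
  set T : Set ℝ := {t : ℝ | ((t * P : ℝ) : ℂ) ∈ B} with hT
  have hTfin : T.Finite := by
    have hinj : Function.Injective (fun t : ℝ => ((t * P : ℝ) : ℂ)) := by
      intro s t hst
      have := Complex.ofReal_injective hst
      exact mul_right_cancel₀ hPne this
    exact Set.Finite.preimage hinj.injOn hBfin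
  obtain ⟨t, ht⟩ :
      ((Set.Ioo (b 0 - ε) (b 0 + ε)) \ T).Nonempty := by
    apply Set.Infinite.nonempty
    apply Set.Infinite.diff _ hTfin
    exact Set.Ioo_infinite (by linarith)
  obtain ⟨⟨ht1, ht2⟩, htT⟩ := ht
  refine ⟨Function.update b'' 0 t, ?_, ?_⟩
  · intro i
    by_cases hi : i = 0
    · subst hi
      rw [Function.update_self]
      rw [abs_lt]
      constructor <;> linarith
    · rw [Function.update_of_ne hi, hb'']
      dsimp only
      split
      · next h => rw [h]; rw [abs_lt]; constructor <;> linarith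
      · simp [hε]
  · set b' := Function.update b'' 0 t with hb'
    have hprod : (∏ i : Fin (m + 2), (b' i : ℂ)) = ((t * P : ℝ) : ℂ) := by
      rw [Fin.prod_univ_succ]
      have h0 : b' 0 = t := Function.update_self _ _ _
      have hs : ∀ i : Fin (m + 1), b' i.succ = b'' i.succ := by
        intro i
        exact Function.update_of_ne (Fin.succ_ne_zero i) _ _
      simp only [h0, hs]
      push_cast [hP]
      ring
    rw [charpoly_ring, hprod, ← hq]
    rw [← PerfectField.separable_iff_squarefree]
    rw [Polynomial.Separable]
    rw [Polynomial.isCoprime_iff_aeval_ne_zero_of_isAlgClosed ℂ ℂ]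
    intro z
    by_contra hcon
    push_neg at hcon
    obtain ⟨h1, h2⟩ := hcon
    rw [coe_aeval_eq_eval] at h1 h2
    rw [derivative_sub, derivative_C, sub_zero] at h2
    rw [eval_sub, eval_C, sub_eq_zero] at h1
    apply htT
    rw [hT, Set.mem_setOf_eq, hB]
    exact ⟨z, h2, h1⟩
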